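/- arXiv:2508.19794 — 2 statements merged into one kernel-verified Lean document; each statement's English description precedes it below -/
import Mathlib

section
/- Let F and H be non-isomorphic r-uniform hypergraphs without isolated vertices. Then there exists a hypergraph X that is an edge-induced sub-hypergraph of F or of H such that the number of homomorphisms from F to X differs from the number of homomorphisms from H to X. -/
/-- A hypergraph on a vertex type `V`. -/
structure Hypergraph' (V : Type) where
  edges : Finset (Finset V)

/-- A hypergraph is `r`-uniform if every hyperedge has cardinality `r`. -/
def Hypergraph'.Uniform {V : Type} (G : Hypergraph' V) (r : ℕ) : Prop :=
  ∀ e ∈ G.edges, e.card = r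

/-- No isolated vertices: every vertex lies in some hyperedge. -/
def Hypergraph'.NoIsolated {V : Type} (G : Hypergraph' V) : Prop :=
  ∀ v : V, ∃ e ∈ G.edges, v ∈ e

/-- Number of homomorphisms. -/
noncomputable def homCount {VF VG : Type} [DecidableEq VG]
    (F : Hypergraph' VF) (G : Hypergraph' VG) : ℕ :=
  Nat.card {h : VF → VG // ∀ e ∈ F.edges, e.image h ∈ G.edges}

/-- The edge-induced sub-hypergraph given by a set `J` of hyperedges: its vertex set is
the union of the hyperedges in `J` and its edge set is `J`. -/
def Hypergraph'.induce {V : Type} [DecidableEq V] (B : Hypergraph' V)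
    (J : Finset (Finset V)) : Hypergraph' {v : V // ∃ e ∈ J, v ∈ e} :=
  ⟨J.image (fun e => e.subtype (fun v => ∃ e' ∈ J, v ∈ e'))⟩

/-- Hypergraph' isomorphism: a bijection of vertex sets preserving hyperedges in both
directions. -/
def IsIso {α β : Type} [DecidableEq β] (G : Hypergraph' α) (H : Hypergraph' β) : Prop :=
  ∃ a : α ≃ β, ∀ e : Finset α, e ∈ G.edges ↔ e.image a ∈ H.edges

/-- The set of images of edges under a map. -/
def imageSet {VF VB : Type} [DecidableEq VB] (F : Hypergraph' VF) (h : VF → VB) :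
    Finset (Finset VB) :=
  F.edges.image (fun e => e.image h)

/-- If there are edge-surjective homomorphisms in both directions, the hypergraphs are
isomorphic. -/
lemma iso_of_surj {VF VH : Type} [Fintype VF] [Fintype VH] [DecidableEq VF] [DecidableEq VH]
    (F : Hypergraph' VF) (H : Hypergraph' VH)
    (hFisoA : F.NoIsolated) (hHiso : H.NoIsolated)
    (f : VF → VH) (g : VH → VF)
    (hf : imageSet F f = H.edges) (hg : imageSet H g = F.edges) : IsIso F H := by
  have hfhom : ∀ e ∈ F.edges, e.image f ∈ H.edges := by
    intro e he; rw [← hf]; exact Finset.mem_image_of_mem _ he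
  have hghom : ∀ e ∈ H.edges, e.image g ∈ F.edges := by
    intro e he; rw [← hg]; exact Finset.mem_image_of_mem _ he
  have hfs : ∀ e' ∈ H.edges, ∃ e ∈ F.edges, e.image f = e' := by
    intro e' he'; rw [← hf] at he'; simpa [imageSet] using he'
  have hgs : ∀ e' ∈ F.edges, ∃ e ∈ H.edges, e.image g = e' := by
    intro e' he'; rw [← hg] at he'; simpa [imageSet] using he'
  -- φ = g ∘ f is an edge-surjective self-homomorphism of F
  have hφs : ∀ e' ∈ F.edges, ∃ e ∈ F.edges, e.image (g ∘ f) = e' := by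
    intro e' he'
    obtain ⟨e₁, he₁, h1⟩ := hgs e' he'
    obtain ⟨e₂, he₂, h2⟩ := hfs e₁ he₁
    exact ⟨e₂, he₂, by rw [← Finset.image_image, h2, h1]⟩
  have hψs : ∀ e' ∈ H.edges, ∃ e ∈ H.edges, e.image (f ∘ g) = e' := by
    intro e' he'
    obtain ⟨e₁, he₁, h1⟩ := hfs e' he'
    obtain ⟨e₂, he₂, h2⟩ := hgs e₁ he₁
    exact ⟨e₂, he₂, by rw [← Finset.image_image, h2, h1]⟩
  have hφsurj : Function.Surjective (g ∘ f) := by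
    intro w
    obtain ⟨e', he', hw⟩ := hFisoA w
    obtain ⟨e, he, him⟩ := hφs e' he'
    rw [← him] at hw
    obtain ⟨v, _, hv⟩ := Finset.mem_image.mp hw
    exact ⟨v, hv⟩
  have hψsurj : Function.Surjective (f ∘ g) := by
    intro w
    obtain ⟨e', he', hw⟩ := hHiso w
    obtain ⟨e, he, him⟩ := hψs e' he'
    rw [← him] at hw
    obtain ⟨v, _, hv⟩ := Finset.mem_image.mp hw
    exact ⟨v, hv⟩
  have hφinj : Function.Injective (g ∘ f) := Finite.injective_iff_surjective.mpr hφsurj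
  have hfinj : Function.Injective f := Function.Injective.of_comp hφinj
  have hfsurj : Function.Surjective f := Function.Surjective.of_comp hψsurj
  have hfbij : Function.Bijective f := ⟨hfinj, hfsurj⟩
  -- the image map of φ sends F.edges bijectively to itself
  have himg : F.edges.image (fun e => e.image (g ∘ f)) = F.edges := by
    apply Finset.eq_of_subset_of_card_le
    · intro t ht
      obtain ⟨e, he, rfl⟩ := Finset.mem_image.mp ht
      rw [← Finset.image_image]
      exact hghom _ (hfhom _ he)
    · rw [Finset.card_image_of_injective _ (Finset.image_injective hφinj)]
  refine ⟨Equiv.ofBijective f hfbij, fun e => ⟨fun he => hfhom e he, fun he => ?_⟩⟩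
  have he' : e.image (g ∘ f) ∈ F.edges := by
    rw [← Finset.image_image]; exact hghom _ he
  rw [← himg] at he'
  obtain ⟨e₀, he₀, heq⟩ := Finset.mem_image.mp he'
  rwa [← Finset.image_injective hφinj heq]

/-- Counting homomorphisms into an induced sub-hypergraph. -/
lemma homCount_induce {VF VB : Type} [DecidableEq VB]
    (F : Hypergraph' VF) (B : Hypergraph' VB) (hFiso : F.NoIsolated)
    (J : Finset (Finset VB)) :
    homCount F (B.induce J) =
      Nat.card {h : VF → VB // ∀ e ∈ F.edges, e.image h ∈ J} := by
  classical
  apply Nat.card_congr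
  refine ⟨fun h' => ⟨fun v => (h'.1 v).1, ?_⟩, fun h => ⟨fun v => ⟨h.1 v, ?_⟩, ?_⟩, ?_, ?_⟩
  · intro e he
    have := h'.2 e he
    simp only [Hypergraph'.induce, Finset.mem_image] at this
    obtain ⟨j, hj, hje⟩ := this
    have : e.image (fun v => (h'.1 v).1) = j := by
      apply Finset.Subset.antisymm
      · intro x hx
        obtain ⟨v, hv, rfl⟩ := Finset.mem_image.mp hx
        have : h'.1 v ∈ Finset.subtype _ j := by
          rw [hje]; exact Finset.mem_image_of_mem _ hv
        exact Finset.mem_subtype.mp this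
      · intro x hx
        have : (⟨x, ⟨j, hj, hx⟩⟩ : {v : VB // ∃ e' ∈ J, v ∈ e'}) ∈
            Finset.subtype (fun v => ∃ e' ∈ J, v ∈ e') j := Finset.mem_subtype.mpr hx
        rw [hje] at this
        obtain ⟨v, hv, hveq⟩ := Finset.mem_image.mp this
        exact Finset.mem_image.mpr ⟨v, hv, by rw [hveq]⟩
    rwa [this]
  · obtain ⟨e, he, hv⟩ := hFiso v
    exact ⟨e.image h.1, h.2 e he, Finset.mem_image_of_mem _ hv⟩
  · intro e he
    simp only [Hypergraph'.induce, Finset.mem_image]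
    refine ⟨e.image h.1, h.2 e he, ?_⟩
    ext x
    simp only [Finset.mem_subtype, Finset.mem_image, Subtype.ext_iff]
  · intro h'; apply Subtype.ext; funext v; apply Subtype.ext; rfl
  · intro h; apply Subtype.ext; funext v; rfl

/-- Number of homs with image edge set contained in `J`, as a `Finset` card. -/
lemma card_subset_homs {VF VB : Type} [Fintype VF] [Fintype VB] [DecidableEq VB]
    (F : Hypergraph' VF) (J : Finset (Finset VB)) :
    Nat.card {h : VF → VB // ∀ e ∈ F.edges, e.image h ∈ J} =
      ∑ K ∈ J.powerset, Nat.card {h : VF → VB // imageSet F h = K} := by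
  classical
  have e1 : Nat.card {h : VF → VB // ∀ e ∈ F.edges, e.image h ∈ J}
      = Nat.card {h : VF → VB // imageSet F h ⊆ J} :=
    Nat.card_congr (Equiv.subtypeEquivRight (fun h => by
      simp [imageSet, Finset.image_subset_iff]))
  rw [e1, Nat.card_eq_fintype_card, Fintype.card_subtype]
  rw [Finset.card_eq_sum_card_fiberwise (f := fun h => imageSet F h) (t := J.powerset)
    (by intro x hx; simp only [Finset.mem_coe, Finset.mem_filter] at hx; simpa using hx.2)]
  apply Finset.sum_congr rfl
  intro K hK
  rw [Nat.card_eq_fintype_card, Fintype.card_subtype]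
  congr 1
  ext h
  simp only [Finset.mem_filter, Finset.mem_univ, true_and, Finset.mem_powerset] at *
  constructor
  · rintro ⟨_, h2⟩; exact h2
  · rintro h2; exact ⟨h2 ▸ hK, h2⟩

/-- If subset-style hom counts agree on all `J ⊆ B.edges`, so do the exact ones. -/
lemma exact_count_eq {VF VH VB : Type} [Fintype VF] [Fintype VH] [Fintype VB] [DecidableEq VB]
    (F : Hypergraph' VF) (H : Hypergraph' VH) (B : Hypergraph' VB)
    (hEq : ∀ J ⊆ B.edges,
      Nat.card {h : VF → VB // ∀ e ∈ F.edges, e.image h ∈ J} =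
      Nat.card {h : VH → VB // ∀ e ∈ H.edges, e.image h ∈ J}) :
    ∀ J ⊆ B.edges,
      Nat.card {h : VF → VB // imageSet F h = J} =
      Nat.card {h : VH → VB // imageSet H h = J} := by
  classical
  intro J
  induction J using Finset.strongInduction with
  | _ J ih =>
    intro hJ
    have h1 := card_subset_homs F J
    have h2 := card_subset_homs H J
    rw [hEq J hJ] at h1
    rw [← Finset.sum_erase_add _ _ (Finset.mem_powerset_self J)] at h1 h2
    have hrest : ∑ K ∈ J.powerset.erase J, Nat.card {h : VF → VB // imageSet F h = K} =
        ∑ K ∈ J.powerset.erase J, Nat.card {h : VH → VB // imageSet H h = K} := by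
      apply Finset.sum_congr rfl
      intro K hK
      simp only [Finset.mem_erase, Finset.mem_powerset] at hK
      exact ih K (ssubset_of_ne_of_subset hK.1 hK.2) (hK.2.trans hJ)
    rw [h2, hrest] at h1
    exact (Nat.add_left_cancel h1).symm

/-- if `F` and `H` are non-isomorphic `r`-uniform hypergraphs without
isolated vertices, then some edge-induced sub-hypergraph `X` of `F` or of `H`
distinguishes them by homomorphism counts: `#Hom(F → X) ≠ #Hom(H → X)`. -/
theorem stmt_3 {VF VH : Type} [Fintype VF] [Fintype VH] [DecidableEq VF] [DecidableEq VH]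
    (r : ℕ) (F : Hypergraph' VF) (H : Hypergraph' VH)
    (hF : F.Uniform r) (hH : H.Uniform r)
    (hFiso : F.NoIsolated) (hHiso : H.NoIsolated)
    (hniso : ¬ IsIso F H) :
    (∃ J ⊆ F.edges, homCount F (F.induce J) ≠ homCount H (F.induce J)) ∨
    (∃ J ⊆ H.edges, homCount F (H.induce J) ≠ homCount H (H.induce J)) := by
  by_contra hc
  push_neg at hc
  obtain ⟨hcF, hcH⟩ := hc
  -- translate the equalities
  have hEqF : ∀ J ⊆ F.edges,
      Nat.card {h : VF → VF // ∀ e ∈ F.edges, e.image h ∈ J} =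
      Nat.card {h : VH → VF // ∀ e ∈ H.edges, e.image h ∈ J} := by
    intro J hJ
    rw [← homCount_induce F F hFiso J, ← homCount_induce H F hHiso J]
    exact hcF J hJ
  have hEqH : ∀ J ⊆ H.edges,
      Nat.card {h : VF → VH // ∀ e ∈ F.edges, e.image h ∈ J} =
      Nat.card {h : VH → VH // ∀ e ∈ H.edges, e.image h ∈ J} := by
    intro J hJ
    rw [← homCount_induce F H hFiso J, ← homCount_induce H H hHiso J]
    exact hcH J hJ
  -- the identity is an exact hom F → F with image set F.edges
  have hidF : 0 < Nat.card {h : VF → VF // imageSet F h = F.edges} := by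
    rw [Nat.card_pos_iff]
    exact ⟨⟨⟨id, by simp [imageSet]⟩⟩, inferInstance⟩
  have hidH : 0 < Nat.card {h : VH → VH // imageSet H h = H.edges} := by
    rw [Nat.card_pos_iff]
    exact ⟨⟨⟨id, by simp [imageSet]⟩⟩, inferInstance⟩
  -- get edge-surjective homs both ways
  have hg : 0 < Nat.card {h : VH → VF // imageSet H h = F.edges} := by
    rw [← exact_count_eq F H F hEqF F.edges (le_refl _)]; exact hidF
  have hf : 0 < Nat.card {h : VF → VH // imageSet F h = H.edges} := by
    rw [exact_count_eq F H H hEqH H.edges (le_refl _)]; exact hidH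
  obtain ⟨⟨g, hgprop⟩⟩ := (Nat.card_pos_iff.mp hg).1
  obtain ⟨⟨f, hfprop⟩⟩ := (Nat.card_pos_iff.mp hf).1
  exact hniso (iso_of_surj F H hFiso hHiso f g hfprop hgprop)
end

section
/- Every 4-regular graph contains a 2-regular spanning subgraph (a 2-factor). -/
open SimpleGraph

variable {V : Type} [Fintype V]

-- sum of ncard of neighborSets over an adjacency-closed finset is even
lemma even_sum_closed (G : SimpleGraph V) (S : Finset V)
    (hcl : ∀ x ∈ S, ∀ y, G.Adj x y → y ∈ S) :
    Even (∑ x ∈ S, (G.neighborSet x).ncard) := by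
  classical
  have key : ∀ x : V, ∀ hx : x ∈ S,
      ((G.induce (S : Set V)).neighborSet ⟨x, hx⟩).ncard = (G.neighborSet x).ncard := by
    intro x hx
    have himg : Subtype.val '' ((G.induce (S : Set V)).neighborSet ⟨x, hx⟩)
        = G.neighborSet x := by
      ext y
      simp only [Set.mem_image, mem_neighborSet, comap_adj, Function.Embedding.coe_subtype]
      constructor
      · rintro ⟨⟨y', hy'⟩, hadj, rfl⟩
        exact hadj
      · intro hadj
        exact ⟨⟨y, hcl x hx y hadj⟩, hadj, rfl⟩
    rw [← himg, Set.ncard_image_of_injective _ Subtype.val_injective]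
  have h1 : ∑ x ∈ S, (G.neighborSet x).ncard
      = ∑ x : (S : Set V), ((G.induce (S : Set V)).neighborSet x).ncard := by
    rw [Finset.sum_subtype S (fun x => Finset.mem_coe.symm) (fun x => (G.neighborSet x).ncard)]
    exact Finset.sum_congr rfl fun ⟨x, hx⟩ _ => (key x (by simpa using hx)).symm
  rw [h1]
  have h2 : ∀ x : (S : Set V), ((G.induce (S : Set V)).neighborSet x).ncard
      = (G.induce (S : Set V)).degree x := by
    intro x
    rw [← card_neighborFinset_eq_degree]
    exact Set.ncard_eq_toFinset_card' _
  simp_rw [h2]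
  rw [SimpleGraph.sum_degrees_eq_twice_card_edges]
  exact even_two_mul _

lemma exists_cycle_of_even (G : SimpleGraph V) (heven : ∀ v, Even ((G.neighborSet v).ncard))
    {u v : V} (hadj : G.Adj u v) :
    ∃ (x : V) (p : G.Walk x x), p.IsCycle ∧ s(u, v) ∈ p.edges := by
  classical
  rw [← adj_and_reachable_delete_edges_iff_exists_cycle]
  refine ⟨hadj, ?_⟩
  by_contra hreach
  set G' := G \ fromEdgeSet {s(u, v)} with hG'
  have hG'adj : ∀ a b, G'.Adj a b ↔ G.Adj a b ∧ s(a, b) ≠ s(u, v) := by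
    intro a b
    simp only [hG', sdiff_adj, fromEdgeSet_adj, Set.mem_singleton_iff]
    constructor
    · rintro ⟨h1, h2⟩
      exact ⟨h1, fun h => h2 ⟨h, h1.ne⟩⟩
    · rintro ⟨h1, h2⟩
      exact ⟨h1, fun h => h2 h.1⟩
  set S : Finset V := Finset.univ.filter (fun x => G'.Reachable u x) with hS
  have hus : u ∈ S := by simp only [hS, Finset.mem_filter, Finset.mem_univ, true_and]; exact Reachable.refl u
  have hvs : v ∉ S := by simp only [hS, Finset.mem_filter, Finset.mem_univ, true_and]; exact hreach
  have hcl : ∀ x ∈ S, ∀ y, G'.Adj x y → y ∈ S := by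
    intro x hx y hxy
    simp only [hS, Finset.mem_filter, Finset.mem_univ, true_and] at hx ⊢
    exact hx.trans hxy.reachable
  have heq : ∀ x ∈ S, x ≠ u → G'.neighborSet x = G.neighborSet x := by
    intro x hx hxu
    ext y
    simp only [mem_neighborSet, hG'adj]
    constructor
    · exact fun h => h.1
    · intro h
      refine ⟨h, fun he => ?_⟩
      rw [Sym2.eq_iff] at he
      rcases he with ⟨rfl, rfl⟩ | ⟨rfl, rfl⟩
      · exact hxu rfl
      · exact hvs hx
  have hu' : G'.neighborSet u = G.neighborSet u \ {v} := by
    ext y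
    simp only [mem_neighborSet, hG'adj, Set.mem_diff, Set.mem_singleton_iff]
    constructor
    · rintro ⟨h1, h2⟩
      exact ⟨h1, fun h => h2 (by rw [h])⟩
    · rintro ⟨h1, h2⟩
      refine ⟨h1, fun he => ?_⟩
      rw [Sym2.eq_iff] at he
      rcases he with ⟨-, rfl⟩ | ⟨h3, -⟩
      · exact h2 rfl
      · exact hadj.ne h3
  have hucard : (G'.neighborSet u).ncard = (G.neighborSet u).ncard - 1 := by
    rw [hu']
    exact Set.ncard_diff_singleton_of_mem hadj
  have hEven := even_sum_closed G' S hcl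
  have hOdd : ¬ Even (∑ x ∈ S, (G'.neighborSet x).ncard) := by
    rw [← Finset.add_sum_erase _ _ hus]
    intro h
    have h2 : Even (∑ x ∈ S.erase u, (G'.neighborSet x).ncard) := by
      apply Finset.even_sum
      intro x hx
      rw [heq x (Finset.mem_of_mem_erase hx) (Finset.ne_of_mem_erase hx)]
      exact heven x
    have h3 : Even ((G'.neighborSet u).ncard) := (Nat.even_add.mp h).mpr h2
    rw [hucard] at h3
    have hpos : 0 < (G.neighborSet u).ncard := by
      rw [Set.ncard_pos]
      exact ⟨v, hadj⟩
    obtain ⟨m, hm⟩ := h3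
    obtain ⟨k, hk⟩ := heven u
    omega
  exact hOdd hEven
-- counting: for a list of darts with nodup, out-set ncard = count of v among fsts
lemma dart_out_ncard [DecidableEq V] {G : SimpleGraph V} (L : List G.Dart) (hL : L.Nodup) (v : V) :
    {w | ∃ d ∈ L, d.toProd = (v, w)}.ncard = List.count v (L.map (·.fst)) := by
  classical
  have hset : {w | ∃ d ∈ L, d.toProd = (v, w)}
      = ↑(((L.filter (fun d => d.fst = v)).map (·.snd)).toFinset) := by
    ext w
    simp only [Set.mem_setOf_eq, Finset.coe_sort_coe, List.coe_toFinset, Set.mem_setOf_eq,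
      List.mem_map, List.mem_filter, decide_eq_true_eq]
    constructor
    · rintro ⟨d, hd, hprod⟩
      exact ⟨d, ⟨hd, by rw [show d.fst = (d.toProd).1 from rfl, hprod]⟩,
        by rw [show d.snd = (d.toProd).2 from rfl, hprod]⟩
    · rintro ⟨d, ⟨hd, hfst⟩, hsnd⟩
      exact ⟨d, hd, Prod.ext hfst hsnd⟩
  rw [hset, Set.ncard_coe_finset, List.toFinset_card_of_nodup, List.length_map,
    List.count_eq_countP, List.countP_map, ← List.countP_eq_length_filter]
  · apply List.countP_congr
    intro d _
    simp
  · apply List.Nodup.map_on _ (hL.filter _)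
    intro d1 hd1 d2 hd2 hsnd
    rw [List.mem_filter, decide_eq_true_eq] at hd1 hd2
    exact Dart.ext _ _ (Prod.ext (hd1.2.trans hd2.2.symm) hsnd)

lemma dart_in_ncard [DecidableEq V] {G : SimpleGraph V} (L : List G.Dart) (hL : L.Nodup) (v : V) :
    {a | ∃ d ∈ L, d.toProd = (a, v)}.ncard = List.count v (L.map (·.snd)) := by
  have hsym_inj : Function.Injective (Dart.symm : G.Dart → G.Dart) :=
    Function.Involutive.injective (fun d => Dart.symm_involutive d)
  have hset : {a | ∃ d ∈ L, d.toProd = (a, v)}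
      = {w | ∃ d ∈ L.map Dart.symm, d.toProd = (v, w)} := by
    ext a
    simp only [Set.mem_setOf_eq, List.mem_map]
    constructor
    · rintro ⟨d, hd, hp⟩
      exact ⟨d.symm, ⟨d, hd, rfl⟩, by simp [Dart.symm, hp]⟩
    · rintro ⟨d', ⟨d, hd, rfl⟩, hp⟩
      refine ⟨d, hd, ?_⟩
      have : d.toProd.swap = (v, a) := hp
      have := congrArg Prod.swap this
      simpa using this
  rw [hset, dart_out_ncard _ (hL.map hsym_inj)]
  congr 1
  rw [List.map_map]
  rfl

lemma cycle_orient {G : SimpleGraph V} {x : V} {c : G.Walk x x} (hc : c.IsCycle) :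
    ∃ D : V → V → Prop,
      (∀ a b, s(a, b) ∈ c.edges ↔ (D a b ∨ D b a)) ∧
      (∀ a b, ¬(D a b ∧ D b a)) ∧
      (∀ a b, D a b → G.Adj a b) ∧
      (∀ v, {w | D v w}.ncard = {w | D w v}.ncard) := by
  classical
  refine ⟨fun a b => ∃ d ∈ c.darts, d.toProd = (a, b), ?_, ?_, ?_, ?_⟩
  · intro a b
    show s(a, b) ∈ c.darts.map Dart.edge ↔ _
    simp only [List.mem_map]
    constructor
    · rintro ⟨d, hd, he⟩
      rw [show d.edge = s(d.toProd.1, d.toProd.2) from rfl, Sym2.eq_iff] at he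
      rcases he with ⟨h1, h2⟩ | ⟨h1, h2⟩
      · exact Or.inl ⟨d, hd, Prod.ext h1 h2⟩
      · exact Or.inr ⟨d, hd, Prod.ext h1 h2⟩
    · rintro (⟨d, hd, hp⟩ | ⟨d, hd, hp⟩)
      · exact ⟨d, hd, by rw [show d.edge = s(d.toProd.1, d.toProd.2) from rfl, hp]⟩
      · exact ⟨d, hd, by rw [show d.edge = s(d.toProd.1, d.toProd.2) from rfl, hp]; exact Sym2.eq_swap⟩
  · rintro a b ⟨⟨d, hd, hp⟩, ⟨d', hd', hp'⟩⟩
    have hab : a ≠ b := by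
      have := d.adj
      rw [hp] at this
      exact this.ne
    have hedge : d.edge = d'.edge := by
      rw [show d.edge = s(d.toProd.1, d.toProd.2) from rfl, show d'.edge = s(d'.toProd.1, d'.toProd.2) from rfl,
        hp, hp']
      exact Sym2.eq_swap
    have hnodup : (c.darts.map Dart.edge).Nodup := hc.edges_nodup
    have hdd : d = d' := List.inj_on_of_nodup_map hnodup hd hd' hedge
    rw [hdd, hp'] at hp
    simp only [Prod.mk.injEq] at hp
    exact hab hp.1.symm
  · rintro a b ⟨d, hd, hp⟩
    have := d.adj
    rwa [hp] at this
  · intro v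
    have hnd : c.darts.Nodup := hc.edges_nodup.of_map Dart.edge
    rw [dart_out_ncard _ hnd, dart_in_ncard _ hnd]
    have hAB : c.darts.map (·.fst) ++ [x] = x :: c.darts.map (·.snd) := by
      rw [Walk.map_fst_darts_append, Walk.cons_map_snd_darts]
    have := congrArg (List.count v) hAB
    simp only [List.count_append, List.count_cons] at this
    by_cases hxv : x = v
    · simp only [hxv, beq_self_eq_true, if_true, List.count_nil] at this
      omega
    · simp only [List.count_nil, beq_iff_eq, hxv, if_false, Ne.symm hxv] at this
      omega

lemma orient_even : ∀ (n : ℕ) (G : SimpleGraph V), G.edgeSet.ncard ≤ n →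
    (∀ v, Even ((G.neighborSet v).ncard)) →
    ∃ D : V → V → Prop,
      (∀ a b, G.Adj a b ↔ (D a b ∨ D b a)) ∧
      (∀ a b, ¬(D a b ∧ D b a)) ∧
      (∀ v, {w | D v w}.ncard = {w | D w v}.ncard) := by
  intro n
  induction n with
  | zero =>
    intro G hcard _
    refine ⟨fun _ _ => False, ?_, by simp, by simp⟩
    intro a b
    simp only [or_self, iff_false]
    intro hadj
    have : s(a, b) ∈ G.edgeSet := hadj
    have hne : G.edgeSet.Nonempty := ⟨_, this⟩
    have := Set.ncard_pos (Set.toFinite _) |>.mpr hne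
    omega
  | succ n ih =>
    intro G hcard heven
    by_cases hE : ∃ a b, G.Adj a b
    · obtain ⟨u, v, hadj⟩ := hE
      obtain ⟨x, c, hc, hec⟩ := exists_cycle_of_even G heven hadj
      obtain ⟨DC, hDCedge, hDCasym, hDCadj, hDCbal⟩ := cycle_orient hc
      set G' := G.deleteEdges {e | e ∈ c.edges} with hG'def
      have hG'adj : ∀ a b, G'.Adj a b ↔ G.Adj a b ∧ s(a, b) ∉ c.edges := by
        intro a b
        simp [hG'def, deleteEdges_adj]
      -- neighbor sets
      have hnbr : ∀ w : V, G'.neighborSet w = G.neighborSet w \ {z | s(w, z) ∈ c.edges} := by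
        intro w
        ext z
        simp only [mem_neighborSet, hG'adj, Set.mem_diff, Set.mem_setOf_eq]
      have hsub : ∀ w : V, {z | s(w, z) ∈ c.edges} ⊆ G.neighborSet w := by
        intro w z hz
        exact c.adj_of_mem_edges hz
      have hsplit : ∀ w : V, {z | s(w, z) ∈ c.edges} = {z | DC w z} ∪ {z | DC z w} := by
        intro w
        ext z
        simp only [Set.mem_setOf_eq, Set.mem_union]
        exact hDCedge w z
      have hdisj : ∀ w : V, Disjoint {z | DC w z} {z | DC z w} := by
        intro w
        rw [Set.disjoint_left]
        intro z h1 h2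
        exact hDCasym w z ⟨h1, h2⟩
      have hCcard : ∀ w : V, {z | s(w, z) ∈ c.edges}.ncard
          = {z | DC w z}.ncard + {z | DC z w}.ncard := by
        intro w
        rw [hsplit w, Set.ncard_union_eq (hdisj w) (Set.toFinite _) (Set.toFinite _)]
      -- evenness for G'
      have heven' : ∀ w, Even ((G'.neighborSet w).ncard) := by
        intro w
        rw [hnbr w, Set.ncard_diff (hsub w) (Set.toFinite _)]
        obtain ⟨k, hk⟩ := heven w
        have hle := Set.ncard_le_ncard (hsub w) (Set.toFinite _)
        have h2 := hCcard w
        have h3 := hDCbal w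
        refine ⟨k - {z | DC w z}.ncard, by omega⟩
      -- edge count decreases
      have hlt : G'.edgeSet.ncard ≤ n := by
        have hss : G'.edgeSet ⊂ G.edgeSet := by
          constructor
          · intro e he
            induction e with
            | _ a b =>
              rw [mem_edgeSet, hG'adj] at he
              exact he.1
          · intro hsup
            have h1 : s(u, v) ∈ G'.edgeSet := hsup hadj
            rw [mem_edgeSet, hG'adj] at h1
            exact h1.2 hec
        have := Set.ncard_lt_ncard hss (Set.toFinite _)
        omega
      obtain ⟨D', hD'iff, hD'asym, hD'bal⟩ := ih G' hlt heven'
      -- combine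
      have hD'notc : ∀ a b, D' a b → s(a, b) ∉ c.edges := by
        intro a b h
        have : G'.Adj a b := (hD'iff a b).mpr (Or.inl h)
        exact ((hG'adj a b).mp this).2
      have hDCc : ∀ a b, DC a b → s(a, b) ∈ c.edges := by
        intro a b h
        exact (hDCedge a b).mpr (Or.inl h)
      refine ⟨fun a b => D' a b ∨ DC a b, ?_, ?_, ?_⟩
      · intro a b
        constructor
        · intro hadj'
          by_cases hce : s(a, b) ∈ c.edges
          · rcases (hDCedge a b).mp hce with h | h
            · exact Or.inl (Or.inr h)
            · exact Or.inr (Or.inr h)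
          · have : G'.Adj a b := (hG'adj a b).mpr ⟨hadj', hce⟩
            rcases (hD'iff a b).mp this with h | h
            · exact Or.inl (Or.inl h)
            · exact Or.inr (Or.inl h)
        · rintro ((h | h) | (h | h))
          · exact ((hG'adj a b).mp ((hD'iff a b).mpr (Or.inl h))).1
          · exact hDCadj a b h
          · exact (((hG'adj b a).mp ((hD'iff b a).mpr (Or.inl h))).1).symm
          · exact (hDCadj b a h).symm
      · rintro a b ⟨h1 | h1, h2 | h2⟩
        · exact hD'asym a b ⟨h1, h2⟩
        · exact hD'notc a b h1 (by rw [Sym2.eq_swap]; exact hDCc b a h2)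
        · exact hD'notc b a h2 (by rw [Sym2.eq_swap]; exact hDCc a b h1)
        · exact hDCasym a b ⟨h1, h2⟩
      · intro w
        have hsplitO : {z | D' w z ∨ DC w z} = {z | D' w z} ∪ {z | DC w z} := rfl
        have hsplitI : {z | D' z w ∨ DC z w} = {z | D' z w} ∪ {z | DC z w} := rfl
        have hdO : Disjoint {z | D' w z} {z | DC w z} := by
          rw [Set.disjoint_left]
          intro z h1 h2
          exact hD'notc w z h1 (hDCc w z h2)
        have hdI : Disjoint {z | D' z w} {z | DC z w} := by
          rw [Set.disjoint_left]
          intro z h1 h2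
          exact hD'notc z w h1 (hDCc z w h2)
        rw [hsplitO, hsplitI, Set.ncard_union_eq hdO (Set.toFinite _) (Set.toFinite _),
          Set.ncard_union_eq hdI (Set.toFinite _) (Set.toFinite _), hD'bal w, hDCbal w]
    · push_neg at hE
      refine ⟨fun _ _ => False, ?_, by simp, by simp⟩
      intro a b
      simp only [or_self, iff_false]
      exact hE a b

/-- Petersen, case r = 4: every 4-regular (finite) graph contains a
2-regular spanning subgraph, i.e. a 2-factor. -/
theorem stmt_16 {V : Type} [Fintype V]
    (F : SimpleGraph V) (hreg : ∀ v : V, (F.neighborSet v).ncard = 4) :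
    ∃ F' : SimpleGraph V, F' ≤ F ∧ ∀ v : V, (F'.neighborSet v).ncard = 2 := by
  classical
  have heven : ∀ v, Even ((F.neighborSet v).ncard) := fun v => by rw [hreg v]; exact ⟨2, rfl⟩
  obtain ⟨D, hDiff, hDasym, hDbal⟩ := orient_even F.edgeSet.ncard F le_rfl heven
  -- out/in degrees are 2
  have hnbrsplit : ∀ v, F.neighborSet v = {w | D v w} ∪ {w | D w v} := by
    intro v
    ext w
    simp only [mem_neighborSet, Set.mem_union, Set.mem_setOf_eq]
    exact hDiff v w
  have hdisj : ∀ v, Disjoint {w | D v w} {w | D w v} := by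
    intro v
    rw [Set.disjoint_left]
    exact fun w h1 h2 => hDasym v w ⟨h1, h2⟩
  have hout : ∀ v, {w | D v w}.ncard = 2 := by
    intro v
    have h4 := hreg v
    rw [hnbrsplit v, Set.ncard_union_eq (hdisj v) (Set.toFinite _) (Set.toFinite _)] at h4
    have := hDbal v
    omega
  have hin : ∀ v, {w | D w v}.ncard = 2 := fun v => (hDbal v).symm.trans (hout v)
  -- Hall's condition
  set t : V → Finset V := fun v => (Set.toFinite {w | D v w}).toFinset with ht
  have htcard : ∀ v, (t v).card = 2 := by
    intro v
    rw [ht]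
    rw [← Set.ncard_eq_toFinset_card _ (Set.toFinite _)]
    exact hout v
  have hmem : ∀ v w, w ∈ t v ↔ D v w := by
    intro v w
    simp [ht, Set.Finite.mem_toFinset]
  have hall : ∀ s : Finset V, s.card ≤ (s.biUnion t).card := by
    intro s
    set B := s.biUnion t with hB
    have h1 : 2 * s.card = ∑ v ∈ s, (t v).card := by
      rw [Finset.sum_congr rfl (fun v _ => htcard v), Finset.sum_const, smul_eq_mul, mul_comm]
    have h2 : ∀ v ∈ s, (t v).card = (B.filter (fun w => w ∈ t v)).card := by
      intro v hv
      rw [Finset.filter_mem_eq_inter, Finset.inter_eq_right.mpr (Finset.subset_biUnion_of_mem t hv)]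
    have h3 : ∑ v ∈ s, (t v).card = ∑ w ∈ B, (s.filter (fun v => w ∈ t v)).card := by
      rw [Finset.sum_congr rfl h2]
      simp_rw [Finset.card_filter]
      exact Finset.sum_comm
    have h4 : ∀ w, (s.filter (fun v => w ∈ t v)).card ≤ 2 := by
      intro w
      have hsub : s.filter (fun v => w ∈ t v) ⊆ (Set.toFinite {v | D v w}).toFinset := by
        intro v hv
        rw [Finset.mem_filter] at hv
        rw [Set.Finite.mem_toFinset]
        exact (hmem v w).mp hv.2
      calc (s.filter (fun v => w ∈ t v)).card ≤ ((Set.toFinite {v | D v w}).toFinset).card :=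
            Finset.card_le_card hsub
        _ = {v | D v w}.ncard := (Set.ncard_eq_toFinset_card _ (Set.toFinite _)).symm
        _ = 2 := hin w
    have h5 : ∑ w ∈ B, (s.filter (fun v => w ∈ t v)).card ≤ 2 * B.card := by
      calc ∑ w ∈ B, (s.filter (fun v => w ∈ t v)).card ≤ ∑ _w ∈ B, 2 :=
            Finset.sum_le_sum (fun w _ => h4 w)
        _ = 2 * B.card := by rw [Finset.sum_const, smul_eq_mul, mul_comm]
    omega
  obtain ⟨f, hfinj, hft⟩ := (Finset.all_card_le_biUnion_card_iff_exists_injective t).mp hall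
  have hfD : ∀ v, D v (f v) := fun v => (hmem v (f v)).mp (hft v)
  have hfbij : Function.Bijective f := (Finite.injective_iff_bijective).mp hfinj
  set e := Equiv.ofBijective f hfbij with he
  set g : V → V := fun v => e.symm v with hg
  have hfg : ∀ v, f (g v) = v := fun v => e.apply_symm_apply v
  have hgf : ∀ v, g (f v) = v := fun v => e.symm_apply_apply v
  -- the 2-factor
  refine ⟨SimpleGraph.fromRel (fun a b => f a = b), ?_, ?_⟩
  · intro a b hab
    rw [fromRel_adj] at hab
    obtain ⟨hne, h | h⟩ := hab
    · exact (hDiff a b).mpr (Or.inl (h ▸ hfD a))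
    · exact (hDiff a b).mpr (Or.inr (h ▸ hfD b))
  · intro v
    have hset : (SimpleGraph.fromRel (fun a b => f a = b)).neighborSet v = {f v, g v} := by
      ext w
      simp only [mem_neighborSet, fromRel_adj, Set.mem_insert_iff, Set.mem_singleton_iff]
      constructor
      · rintro ⟨hne, h | h⟩
        · exact Or.inl h.symm
        · refine Or.inr ?_
          rw [← h, hgf]
      · rintro (rfl | rfl)
        · have := hfD v
          exact ⟨((hDiff v (f v)).mpr (Or.inl this)).ne, Or.inl rfl⟩
        · have hD2 : D (g v) v := by
            have := hfD (g v)
            rwa [hfg] at this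
          exact ⟨((hDiff (g v) v).mpr (Or.inl hD2)).ne.symm, Or.inr (hfg v)⟩
    rw [hset]
    apply Set.ncard_pair
    intro hcon
    apply hDasym v (f v)
    refine ⟨hfD v, ?_⟩
    have := hfD (g v)
    rw [hfg] at this
    rwa [← hcon] at this
end
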